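/- Let c ∈ ℝ and let f₂ : ℝ → ℝ be twice differentiable at a point t, satisfying at t the equation 2 f₂(t) f₂''(t) + 4 f₂'(t)² − 4 + f₂(t)² (1 + c f₂'(t)²) = 0, where f₂' and f₂'' denote the first and second derivatives. Define f : ℝ → ℝ by f(s) = −c f₂(s)²/2 and set R(t) = 4c f₂'(t)² + 2c f₂(t) f₂''(t) + 4. Then the derivative of f at t satisfies f'(t)² = 2 f(t) − R(t) + 4 + 4c. -/

import Mathlib

/-- The conservation law (7.3) of the Koiso–Cao soliton: if `f₂` satisfies the ODE
`2f₂f₂'' + 4f₂'² - 4 + f₂²(1 + c f₂'²) = 0` at `t`, then the Ricci potential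
`f = -c f₂²/2` satisfies `f'² = 2f - R + 4 + 4c` at `t`, where
`R = 4cf₂'² + 2cf₂f₂'' + 4`. -/
theorem koiso_cao_conservation_law (c t : ℝ) (f₂ : ℝ → ℝ)
    (hd1 : DifferentiableAt ℝ f₂ t) (hd2 : DifferentiableAt ℝ (deriv f₂) t)
    (hode : 2 * f₂ t * deriv (deriv f₂) t + 4 * (deriv f₂ t) ^ 2 - 4
        + (f₂ t) ^ 2 * (1 + c * (deriv f₂ t) ^ 2) = 0) :
    (deriv (fun s => -c * (f₂ s) ^ 2 / 2) t) ^ 2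
      = 2 * (-c * (f₂ t) ^ 2 / 2)
        - (4 * c * (deriv f₂ t) ^ 2 + 2 * c * f₂ t * deriv (deriv f₂) t + 4)
        + 4 + 4 * c := by
  have h : deriv (fun s => -c * (f₂ s) ^ 2 / 2) t = -c * f₂ t * deriv f₂ t := by
    have := ((hd1.hasDerivAt.pow 2).const_mul (-c)).div_const 2
    rw [show (fun s => -c * (f₂ s) ^ 2 / 2) = (fun x => -c * (f₂ ^ 2) x / 2) from rfl, this.deriv]; ring
  rw [h]; linear_combination c * hode
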